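/- arXiv:2504.15048 — 3 statements merged into one kernel-verified Lean document; each statement's English description precedes it below -/
import Mathlib

section
/- Let α : ℝ → ℝ be twice differentiable with α(t) > 0 for all t, and suppose α is bounded above. If there is a constant C ∈ ℝ such that α(t)·α''(t) = C for all t ∈ ℝ, then C = 0 and α is constant. -/
/-- A differentiable function bounded above cannot have derivative ≥ ε > 0
on a ray [t0, ∞). -/
lemma ode_rigidity_grow_aux (f : ℝ → ℝ) (hf : Differentiable ℝ f)
    (M : ℝ) (hM : ∀ t, f t ≤ M) (ε t0 : ℝ) (hε : 0 < ε)
    (h : ∀ t, t0 ≤ t → ε ≤ deriv f t) : False := by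
  set b := t0 + (M - f t0) / ε + 1 with hbdef
  have hb : t0 < b := by
    have h0 : 0 ≤ (M - f t0) / ε := div_nonneg (by linarith [hM t0]) hε.le
    simp only [hbdef]; linarith
  obtain ⟨c, hc, hc'⟩ := exists_deriv_eq_slope f hb (hf.continuous.continuousOn)
    (hf.differentiableOn)
  have h1 : ε ≤ (f b - f t0) / (b - t0) := hc' ▸ h c hc.1.le
  have h2 : ε * (b - t0) ≤ f b - f t0 :=
    (le_div_iff₀ (by linarith : (0:ℝ) < b - t0)).mp h1
  have heq : ε * (b - t0) = M - f t0 + ε := by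
    simp only [hbdef]; field_simp; ring
  have := hM b
  linarith

theorem ode_rigidity_alpha_constant
    (α : ℝ → ℝ) (h1 : Differentiable ℝ α) (h2 : Differentiable ℝ (deriv α))
    (hpos : ∀ t, 0 < α t) (hbdd : ∃ M, ∀ t, α t ≤ M)
    (C : ℝ) (hode : ∀ t, α t * deriv (deriv α) t = C) :
    C = 0 ∧ ∀ s t, α s = α t := by
  obtain ⟨M, hM⟩ := hbdd
  have hneg : Differentiable ℝ (fun t => -α t) := h1.neg
  have hrefl : Differentiable ℝ (fun t => α (-t)) := h1.comp differentiable_neg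
  have hnegrefl : Differentiable ℝ (fun t => -α (-t)) := hrefl.neg
  have dneg : ∀ t, deriv (fun t => -α t) t = -deriv α t := fun t => deriv.neg
  have drefl : ∀ t, deriv (fun t => α (-t)) t = -deriv α (-t) := by
    intro t
    have := ((h1 (-t)).hasDerivAt.comp t (hasDerivAt_neg t)).deriv
    simpa [Function.comp_def] using this
  have dnegrefl : ∀ t, deriv (fun t => -α (-t)) t = deriv α (-t) := by
    intro t
    have h' : deriv (fun t => -α (-t)) t = -deriv (fun t => α (-t)) t := deriv.neg
    rw [h', drefl]; ring
  rcases lt_trichotomy C 0 with hC | hC | hC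
  · -- C < 0 : α'' < 0 everywhere, deriv α strictly antitone
    exfalso
    have hdd : ∀ t, deriv (deriv α) t < 0 := by
      intro t; nlinarith [hpos t, hode t]
    have hanti : StrictAnti (deriv α) := strictAnti_of_deriv_neg hdd
    have hzero : ∀ t, deriv α t = 0 := by
      intro t0
      rcases lt_trichotomy (deriv α t0) 0 with h | h | h
      · exact absurd (ode_rigidity_grow_aux (fun t => -α t) hneg 0
          (fun t => by show -α t ≤ 0; linarith [hpos t]) (-deriv α t0) t0 (by linarith)
          (fun t ht => by
            rw [dneg]
            rcases eq_or_lt_of_le ht with rfl | ht'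
            · linarith
            · linarith [hanti ht'])) id
      · exact h
      · exact absurd (ode_rigidity_grow_aux (fun t => -α (-t)) hnegrefl 0
          (fun t => by show -α (-t) ≤ 0; linarith [hpos (-t)]) (deriv α t0) (-t0) h
          (fun t ht => by
            rw [dnegrefl]
            rcases eq_or_lt_of_le (neg_le_neg ht) with h' | h'
            · rw [show -t = t0 by linarith]
            · linarith [hanti (show -t < t0 by linarith)])) id
    have := hanti (show (0:ℝ) < 1 by norm_num)
    rw [hzero 0, hzero 1] at this
    exact lt_irrefl 0 this
  · -- C = 0
    refine ⟨hC, ?_⟩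
    have hdd : ∀ t, deriv (deriv α) t = 0 := by
      intro t
      have h := hode t
      rw [hC] at h
      exact (mul_eq_zero.mp h).resolve_left (hpos t).ne'
    have hconst : ∀ s t, deriv α s = deriv α t :=
      is_const_of_deriv_eq_zero h2 hdd
    set c := deriv α 0 with hc
    have hder : ∀ t, deriv α t = c := fun t => hconst t 0
    have hc0 : c = 0 := by
      rcases lt_trichotomy c 0 with h | h | h
      · exfalso
        exact ode_rigidity_grow_aux (fun t => -α t) hneg 0
          (fun t => by show -α t ≤ 0; linarith [hpos t]) (-c) 0 (by linarith)
          (fun t _ => by rw [dneg, hder])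
      · exact h
      · exfalso
        exact ode_rigidity_grow_aux α h1 M hM c 0 h
          (fun t _ => by rw [hder])
    have hall : ∀ t, deriv α t = 0 := fun t => by rw [hder, hc0]
    exact is_const_of_deriv_eq_zero h1 hall
  · -- C > 0 : α'' > 0 everywhere, deriv α strictly monotone
    exfalso
    have hdd : ∀ t, 0 < deriv (deriv α) t := by
      intro t; nlinarith [hpos t, hode t]
    have hmono : StrictMono (deriv α) := strictMono_of_deriv_pos hdd
    have hzero : ∀ t, deriv α t = 0 := by
      intro t0
      rcases lt_trichotomy (deriv α t0) 0 with h | h | h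
      · exact absurd (ode_rigidity_grow_aux (fun t => α (-t)) hrefl M
          (fun t => hM (-t)) (-deriv α t0) (-t0) (by linarith)
          (fun t ht => by
            rw [drefl]
            rcases eq_or_lt_of_le (neg_le_neg ht) with h' | h'
            · rw [show -t = t0 by linarith]
            · linarith [hmono (show -t < t0 by linarith)])) id
      · exact h
      · exact absurd (ode_rigidity_grow_aux α h1 M hM (deriv α t0) t0 h
          (fun t ht => by
            rcases eq_or_lt_of_le ht with rfl | ht'
            · linarith
            · linarith [hmono ht'])) id
    have := hmono (show (0:ℝ) < 1 by norm_num)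
    rw [hzero 0, hzero 1] at this
    exact lt_irrefl 0 this
end

section
/- Let f : ℝ → ℝ be continuous. Suppose that for every s₀ ∈ ℝ there exist δ > 0 and a function ψ : ℝ → ℝ that is twice differentiable on (s₀ − δ, s₀ + δ), such that ψ(s₀) = f(s₀), ψ(x) ≥ f(x) for all x ∈ (s₀ − δ, s₀ + δ), and the second derivative satisfies ψ''(s₀) ≤ 0. Then f is concave on ℝ. -/
open Set Filter Topology

private lemma second_deriv_nonneg_of_isLocalMin {Φ : ℝ → ℝ} {s₀ δ : ℝ} (hδ : 0 < δ)
    (hmin : IsLocalMin Φ s₀)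
    (hd : DifferentiableOn ℝ Φ (Set.Ioo (s₀ - δ) (s₀ + δ)))
    (hd2 : DifferentiableAt ℝ (deriv Φ) s₀) :
    0 ≤ deriv (deriv Φ) s₀ := by
  by_contra hc
  push_neg at hc
  have hF0 : deriv Φ s₀ = 0 := hmin.deriv_eq_zero
  have hF : HasDerivAt (deriv Φ) (deriv (deriv Φ) s₀) s₀ := hd2.hasDerivAt
  rw [hasDerivAt_iff_tendsto_slope] at hF
  have h1 : ∀ᶠ t in 𝓝[≠] s₀, slope (deriv Φ) s₀ t < 0 := hF.eventually_lt_const hc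
  have h1' : ∀ᶠ t in 𝓝[<] s₀, slope (deriv Φ) s₀ t < 0 :=
    h1.filter_mono (nhdsWithin_mono _ (fun t ht => ne_of_lt ht))
  have h2 : Set.Ioo (s₀ - δ) s₀ ∈ 𝓝[<] s₀ :=
    Ioo_mem_nhdsLT_of_mem ⟨by linarith, le_refl _⟩
  have h2' : ∀ᶠ t in 𝓝[<] s₀, t ∈ Set.Ioo (s₀ - δ) s₀ := h2
  have h3 : ∀ᶠ t in 𝓝[<] s₀, Φ s₀ ≤ Φ t := hmin.filter_mono nhdsWithin_le_nhds
  have hall := h1'.and (h2'.and h3)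
  rw [eventually_iff, mem_nhdsLT_iff_exists_Ioo_subset] at hall
  obtain ⟨l, hl, hsub⟩ := hall
  have hls : l < s₀ := hl
  set t₀ := (l + s₀) / 2 with ht₀def
  have ht₀ : t₀ ∈ Set.Ioo l s₀ :=
    Set.mem_Ioo.mpr ⟨by rw [ht₀def]; linarith, by rw [ht₀def]; linarith⟩
  clear_value t₀
  obtain ⟨_, ht₀mem, ht₀min⟩ := hsub ht₀
  have hFpos : ∀ t ∈ Set.Ioo t₀ s₀, 0 < deriv Φ t := by
    intro t ht
    have htl : t ∈ Set.Ioo l s₀ := ⟨lt_trans ht₀.1 ht.1, ht.2⟩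
    obtain ⟨hslope, _, _⟩ := hsub htl
    rw [slope_def_field, div_lt_iff_of_neg (by linarith [ht.2] : t - s₀ < 0)] at hslope
    have : (0:ℝ) * (t - s₀) < deriv Φ t - deriv Φ s₀ := hslope
    rw [hF0] at this
    linarith
  have hmono : StrictMonoOn Φ (Set.Icc t₀ s₀) := by
    apply strictMonoOn_of_deriv_pos (convex_Icc _ _)
    · apply hd.continuousOn.mono
      intro u hu
      exact ⟨lt_of_lt_of_le ht₀mem.1 hu.1, by rcases hu with ⟨_, h⟩; linarith⟩
    · intro u hu
      rw [interior_Icc] at hu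
      exact hFpos u hu
  have := hmono (Set.left_mem_Icc.mpr (le_of_lt ht₀.2))
    (Set.right_mem_Icc.mpr (le_of_lt ht₀.2)) ht₀.2
  linarith

private lemma key_chord
    (f : ℝ → ℝ) (hf : Continuous f)
    (hsupp : ∀ s₀ : ℝ, ∃ δ > 0, ∃ ψ : ℝ → ℝ,
      DifferentiableOn ℝ ψ (Set.Ioo (s₀ - δ) (s₀ + δ)) ∧
      DifferentiableOn ℝ (deriv ψ) (Set.Ioo (s₀ - δ) (s₀ + δ)) ∧
      ψ s₀ = f s₀ ∧
      (∀ x ∈ Set.Ioo (s₀ - δ) (s₀ + δ), f x ≤ ψ x) ∧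
      deriv (deriv ψ) s₀ ≤ 0)
    (x y : ℝ) (hxy : x < y) (a b : ℝ) (ha : 0 < a) (hb : 0 < b) (hab : a + b = 1) :
    a * f x + b * f y ≤ f (a * x + b * y) := by
  by_contra h
  push_neg at h
  set c := a * x + b * y with hcdef
  clear_value c
  have hyx : (0:ℝ) < y - x := by linarith
  have hcx : c - x = b * (y - x) := by rw [hcdef]; linear_combination x * hab
  have hcy : y - c = a * (y - x) := by rw [hcdef]; linear_combination (-y) * hab
  have hxc : x < c := by nlinarith
  have hcy' : c < y := by nlinarith
  set m := (f y - f x) / (y - x) with hmdef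
  clear_value m
  have hm' : m * (y - x) = f y - f x := by
    rw [hmdef]; exact div_mul_cancel₀ _ (ne_of_gt hyx)
  set L := fun t : ℝ => f x + m * (t - x) with hLdef
  clear_value L
  have hLc : L c = a * f x + b * f y := by
    simp only [hLdef]
    rw [hcx]
    linear_combination b * hm' - (f x) * hab
  set m₀ := a * f x + b * f y - f c with hm₀def
  clear_value m₀
  have hm₀ : 0 < m₀ := by rw [hm₀def]; linarith
  set ε := m₀ / (2 * ((c - x) * (y - c))) with hεdef
  clear_value ε
  have hprod : 0 < (c - x) * (y - c) := mul_pos (by linarith) (by linarith)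
  have hε : 0 < ε := by rw [hεdef]; exact div_pos hm₀ (by linarith)
  have hεc : ε * ((c - x) * (y - c)) = m₀ / 2 := by
    rw [hεdef, div_mul_eq_mul_div, mul_div_mul_right _ _ hprod.ne']
  set q := fun t : ℝ => -L t + ε * ((t - x) * (y - t)) with hqdef
  clear_value q
  set g := fun t : ℝ => f t + q t with hgdef
  clear_value g
  have hgcont : Continuous g := by
    simp only [hgdef, hqdef, hLdef]
    apply hf.add
    apply Continuous.add
    · exact (continuous_const.add (continuous_const.mul (continuous_id.sub continuous_const))).neg
    · exact continuous_const.mul ((continuous_id.sub continuous_const).mul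
        (continuous_const.sub continuous_id))
  obtain ⟨s₀, hs₀mem, hs₀min⟩ := isCompact_Icc.exists_isMinOn
    (Set.nonempty_Icc.mpr hxy.le) hgcont.continuousOn
  have hgx : g x = 0 := by simp only [hgdef, hqdef, hLdef]; ring
  have hgy : g y = 0 := by
    simp only [hgdef, hqdef, hLdef]
    linear_combination -hm'
  have hgc : g c = -(m₀ / 2) := by
    simp only [hgdef, hqdef]
    rw [hLc, hεc, hm₀def]
    ring
  have hs₀neg : g s₀ < 0 := by
    have h2 : g s₀ ≤ g c := hs₀min (Set.mem_Icc.mpr ⟨hxc.le, hcy'.le⟩)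
    rw [hgc] at h2
    linarith
  have hs₀x : x < s₀ := by
    rcases lt_or_eq_of_le hs₀mem.1 with h' | h'
    · exact h'
    · exfalso; rw [← h', hgx] at hs₀neg; linarith
  have hs₀y : s₀ < y := by
    rcases lt_or_eq_of_le hs₀mem.2 with h' | h'
    · exact h'
    · exfalso; rw [h', hgy] at hs₀neg; linarith
  obtain ⟨δ, hδ, ψ, hψd, hψ'd, hψs, hψub, hψ''⟩ := hsupp s₀
  set δ' := min δ (min (s₀ - x) (y - s₀)) with hδ'def
  have hδ' : 0 < δ' := lt_min hδ (lt_min (by linarith) (by linarith))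
  have hδ'δ : δ' ≤ δ := min_le_left _ _
  have hδ'x : δ' ≤ s₀ - x := le_trans (min_le_right _ _) (min_le_left _ _)
  have hδ'y : δ' ≤ y - s₀ := le_trans (min_le_right _ _) (min_le_right _ _)
  clear_value δ'
  set Ψ := fun t : ℝ => ψ t + q t with hΨdef
  clear_value Ψ
  -- derivatives of q
  have hq : ∀ t : ℝ, HasDerivAt q (-m + ε * (y + x - 2 * t)) t := by
    intro t
    simp only [hqdef, hLdef]
    have h1 : HasDerivAt (fun t : ℝ => f x + m * (t - x)) m t := by
      have h := (((hasDerivAt_id t).sub_const x).const_mul m).const_add (f x)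
      simp only [id_eq, mul_one] at h
      exact h
    have h2 : HasDerivAt (fun t : ℝ => (t - x) * (y - t)) (y + x - 2 * t) t := by
      have h := ((hasDerivAt_id t).sub_const x).mul ((hasDerivAt_id t).const_sub y)
      simp only [id_eq, one_mul, mul_neg, mul_one] at h
      exact h.congr_deriv (by ring)
    exact (h1.neg).add (h2.const_mul ε)
  have hq1 : ∀ t : ℝ, HasDerivAt (fun t : ℝ => -m + ε * (y + x - 2 * t)) (ε * (-2)) t := by
    intro t
    have h2 : HasDerivAt (fun t : ℝ => y + x - 2 * t) (-2 : ℝ) t := by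
      have h := ((hasDerivAt_id t).const_mul 2).const_sub (y + x)
      simp only [id_eq, mul_one] at h
      exact h
    exact (h2.const_mul ε).const_add (-m)
  have hqdiff : ∀ t : ℝ, DifferentiableAt ℝ q t := fun t => (hq t).differentiableAt
  have hU : Set.Ioo (s₀ - δ) (s₀ + δ) ∈ 𝓝 s₀ :=
    isOpen_Ioo.mem_nhds (Set.mem_Ioo.mpr ⟨by linarith, by linarith⟩)
  -- local min of Ψ at s₀
  have hΨmin : IsLocalMin Ψ s₀ := by
    have hnhds : Set.Ioo (s₀ - δ') (s₀ + δ') ∈ 𝓝 s₀ :=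
      isOpen_Ioo.mem_nhds (Set.mem_Ioo.mpr ⟨by linarith, by linarith⟩)
    filter_upwards [hnhds] with t ht
    have htδ : t ∈ Set.Ioo (s₀ - δ) (s₀ + δ) := ⟨by linarith [ht.1], by linarith [ht.2]⟩
    have htIcc : t ∈ Set.Icc x y := ⟨by linarith [ht.1], by linarith [ht.2]⟩
    have h1 : f t ≤ ψ t := hψub t htδ
    have hgs : g s₀ ≤ g t := hs₀min htIcc
    simp only [hgdef] at hgs
    simp only [hΨdef]
    rw [hψs] at *
    linarith
  -- differentiability of Ψ
  have hΨd : DifferentiableOn ℝ Ψ (Set.Ioo (s₀ - δ') (s₀ + δ')) := by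
    rw [hΨdef]
    apply DifferentiableOn.add
    · apply hψd.mono
      intro t ht
      exact ⟨by linarith [ht.1], by linarith [ht.2]⟩
    · exact fun t _ => (hqdiff t).differentiableWithinAt
  have hψat : ∀ t ∈ Set.Ioo (s₀ - δ) (s₀ + δ), DifferentiableAt ℝ ψ t :=
    fun t ht => hψd.differentiableAt (isOpen_Ioo.mem_nhds ht)
  have hψ'at : DifferentiableAt ℝ (deriv ψ) s₀ :=
    hψ'd.differentiableAt hU
  have hderivΨ : deriv Ψ =ᶠ[𝓝 s₀] fun t => deriv ψ t + (-m + ε * (y + x - 2 * t)) := by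
    filter_upwards [hU] with t ht
    rw [hΨdef]
    rw [deriv_fun_add (hψat t ht) (hqdiff t), (hq t).deriv]
  have hΨ'at : DifferentiableAt ℝ (deriv Ψ) s₀ := by
    have hsum : DifferentiableAt ℝ (fun t => deriv ψ t + (-m + ε * (y + x - 2 * t))) s₀ :=
      hψ'at.add (hq1 s₀).differentiableAt
    exact hsum.congr_of_eventuallyEq hderivΨ
  have hΨ'' : deriv (deriv Ψ) s₀ = deriv (deriv ψ) s₀ + ε * (-2) := by
    rw [hderivΨ.deriv_eq, deriv_fun_add hψ'at (hq1 s₀).differentiableAt, (hq1 s₀).deriv]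
  have hge := second_deriv_nonneg_of_isLocalMin hδ' hΨmin hΨd hΨ'at
  rw [hΨ''] at hge
  nlinarith

theorem concave_of_upper_support
    (f : ℝ → ℝ) (hf : Continuous f)
    (hsupp : ∀ s₀ : ℝ, ∃ δ > 0, ∃ ψ : ℝ → ℝ,
      DifferentiableOn ℝ ψ (Set.Ioo (s₀ - δ) (s₀ + δ)) ∧
      DifferentiableOn ℝ (deriv ψ) (Set.Ioo (s₀ - δ) (s₀ + δ)) ∧
      ψ s₀ = f s₀ ∧
      (∀ x ∈ Set.Ioo (s₀ - δ) (s₀ + δ), f x ≤ ψ x) ∧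
      deriv (deriv ψ) s₀ ≤ 0) :
    ConcaveOn ℝ Set.univ f := by
  refine ⟨convex_univ, fun x _ y _ a b ha hb hab => ?_⟩
  simp only [smul_eq_mul]
  rcases eq_or_lt_of_le ha with ha0 | ha0
  · rw [← ha0] at hab ⊢; simp at hab; simp [hab]
  rcases eq_or_lt_of_le hb with hb0 | hb0
  · rw [← hb0] at hab ⊢; simp at hab; simp [hab]
  rcases lt_trichotomy x y with hxy | hxy | hxy
  · exact key_chord f hf hsupp x y hxy a b ha0 hb0 hab
  · subst hxy
    have h1 : a * x + b * x = x := by linear_combination x * hab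
    rw [h1]
    have h2 : a * f x + b * f x = f x := by linear_combination (f x) * hab
    rw [h2]
  · have hk := key_chord f hf hsupp y x hxy b a hb0 ha0 (by linarith)
    calc a * f x + b * f y = b * f y + a * f x := by ring
    _ ≤ f (b * y + a * x) := hk
    _ = f (a * x + b * y) := by rw [add_comm]
end

section
/- Let f : ℝ → ℝ be continuous and periodic with period T > 0. Suppose that for every s₀ ∈ ℝ there exist δ > 0 and a function ψ : ℝ → ℝ that is twice differentiable on (s₀ − δ, s₀ + δ), with ψ(s₀) = f(s₀), ψ(x) ≥ f(x) for all x ∈ (s₀ − δ, s₀ + δ), and ψ''(s₀) ≤ 0. Then f is constant. -/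
open Set Filter Topology

lemma aux_no_min (χ : ℝ → ℝ) (s₀ : ℝ) (U : Set ℝ) (hU : IsOpen U) (hs₀ : s₀ ∈ U)
    (hχ : DifferentiableOn ℝ χ U) (hd2 : DifferentiableAt ℝ (deriv χ) s₀)
    (hmin : ∀ x ∈ U, χ s₀ ≤ χ x) (hneg : deriv (deriv χ) s₀ < 0) : False := by
  have hloc : IsLocalMin χ s₀ := by
    filter_upwards [hU.mem_nhds hs₀] with x hx using hmin x hx
  have hd1 : deriv χ s₀ = 0 := hloc.deriv_eq_zero
  have hder : HasDerivAt (deriv χ) (deriv (deriv χ) s₀) s₀ := hd2.hasDerivAt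
  have hslope := hasDerivAt_iff_tendsto_slope.1 hder
  have hev : ∀ᶠ x in 𝓝[≠] s₀, slope (deriv χ) s₀ x < 0 :=
    hslope.eventually_lt_const hneg
  have hev' : ∀ᶠ x in 𝓝[>] s₀, slope (deriv χ) s₀ x < 0 :=
    hev.filter_mono (nhdsWithin_mono _ (fun x hx => ne_of_gt hx))
  have hevU : ∀ᶠ x in 𝓝[>] s₀, x ∈ U :=
    eventually_nhdsWithin_of_eventually_nhds (hU.eventually_mem hs₀)
  have hcomb : ∀ᶠ x in 𝓝[>] s₀, deriv χ x < 0 ∧ x ∈ U := by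
    filter_upwards [hev', hevU, self_mem_nhdsWithin] with x hx hxU hxs
    refine ⟨?_, hxU⟩
    have hpos : 0 < x - s₀ := sub_pos.2 hxs
    have h2 : slope (deriv χ) s₀ x * (x - s₀) = deriv χ x := by
      rw [slope_def_field, div_mul_cancel₀ _ hpos.ne', hd1, sub_zero]
    nlinarith [mul_neg_of_neg_of_pos hx hpos]
  obtain ⟨u, hu, hIoo⟩ := mem_nhdsGT_iff_exists_Ioo_subset.1 hcomb
  obtain ⟨b, hb1, hb2⟩ := exists_between (mem_Ioi.1 hu)
  have hIccU : Icc s₀ b ⊆ U := by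
    intro z hz
    rcases eq_or_lt_of_le hz.1 with h | h
    · exact h ▸ hs₀
    · exact (hIoo ⟨h, lt_of_le_of_lt hz.2 hb2⟩).2
  have hanti : StrictAntiOn χ (Icc s₀ b) := by
    apply strictAntiOn_of_deriv_neg (convex_Icc _ _) ((hχ.mono hIccU).continuousOn)
    intro z hz
    rw [interior_Icc] at hz
    exact (hIoo ⟨hz.1, hz.2.trans hb2⟩).1
  have hlt : χ b < χ s₀ :=
    hanti (left_mem_Icc.2 hb1.le) (right_mem_Icc.2 hb1.le) hb1
  exact absurd (hmin b (hIccU (right_mem_Icc.2 hb1.le))) (not_le.2 hlt)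

theorem periodic_upper_support_constant
    (f : ℝ → ℝ) (T : ℝ) (hT : 0 < T)
    (hf : Continuous f) (hper : Function.Periodic f T)
    (hsupp : ∀ s₀ : ℝ, ∃ δ > 0, ∃ ψ : ℝ → ℝ,
      DifferentiableOn ℝ ψ (Set.Ioo (s₀ - δ) (s₀ + δ)) ∧
      DifferentiableOn ℝ (deriv ψ) (Set.Ioo (s₀ - δ) (s₀ + δ)) ∧
      ψ s₀ = f s₀ ∧
      (∀ x ∈ Set.Ioo (s₀ - δ) (s₀ + δ), f x ≤ ψ x) ∧
      deriv (deriv ψ) s₀ ≤ 0) :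
    ∀ x y, f x = f y := by
  -- global maximum
  obtain ⟨m, hmI, hmax⟩ := isCompact_Icc.exists_isMaxOn (nonempty_Icc.2 hT.le)
    hf.continuousOn
  have hglob : ∀ x, f x ≤ f m := by
    intro x
    obtain ⟨y, hy, hxy⟩ := hper.exists_mem_Ico₀ hT x
    rw [hxy]
    exact hmax (Ico_subset_Icc_self hy)
  suffices h : ∀ z, f z = f m by intro x y; rw [h x, h y]
  intro z
  obtain ⟨c, hc, hcz⟩ := hper.exists_mem_Ico hT z m
  rw [hcz]
  rcases eq_or_lt_of_le hc.1 with hcm | hcm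
  · rw [← hcm]
  by_contra hne
  have hclt : f c < f m := lt_of_le_of_ne (hglob c) hne
  set ε : ℝ := (f m - f c) / (2 * T ^ 2 + 1) with hε
  have hT2 : (0:ℝ) < 2 * T ^ 2 + 1 := by positivity
  have hεpos : 0 < ε := div_pos (sub_pos.2 hclt) hT2
  have hεT : ε * T ^ 2 < f m - f c := by
    rw [hε, div_mul_eq_mul_div, div_lt_iff₀ hT2]
    nlinarith [sub_pos.2 hclt, sq_nonneg T]
  -- minimum of the perturbed function
  set h : ℝ → ℝ := fun x => f x - ε * (x - c) ^ 2 with hh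
  have hhc : Continuous h := by fun_prop
  obtain ⟨s₀, hs₀I, hminI⟩ := isCompact_Icc.exists_isMinOn
    (nonempty_Icc.2 (by linarith : m ≤ m + T)) hhc.continuousOn
  have hcI : c ∈ Icc m (m + T) := ⟨hc.1, hc.2.le⟩
  have hs₀c : h s₀ ≤ h c := hminI hcI
  have hhcval : h c = f c := by simp [hh]
  have hfmT : f (m + T) = f m := hper m
  have hmc2 : (m - c) ^ 2 ≤ T ^ 2 := by nlinarith [hc.1, hc.2]
  have hmTc2 : (m + T - c) ^ 2 ≤ T ^ 2 := by nlinarith [hc.1, hc.2]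
  have hhm : f c < h m := by
    have : ε * (m - c) ^ 2 ≤ ε * T ^ 2 := by nlinarith
    simp only [hh]; linarith
  have hhmT : f c < h (m + T) := by
    have : ε * (m + T - c) ^ 2 ≤ ε * T ^ 2 := by nlinarith
    simp only [hh, hfmT]; linarith
  have hs₀Ioo : s₀ ∈ Ioo m (m + T) := by
    rcases eq_or_lt_of_le hs₀I.1 with h1 | h1
    · exfalso; rw [h1] at hhm; linarith [hhcval ▸ hs₀c]
    rcases eq_or_lt_of_le hs₀I.2 with h2 | h2
    · exfalso; rw [← h2] at hhmT; linarith [hhcval ▸ hs₀c]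
    exact ⟨h1, h2⟩
  -- upper support function at s₀
  obtain ⟨δ, hδ, ψ, hψd, hψd', hψs₀, hψge, hψ''⟩ := hsupp s₀
  set U : Set ℝ := Ioo (s₀ - δ) (s₀ + δ) ∩ Ioo m (m + T) with hU
  have hUopen : IsOpen U := (isOpen_Ioo).inter isOpen_Ioo
  have hs₀U : s₀ ∈ U := ⟨⟨by linarith, by linarith⟩, hs₀Ioo⟩
  set χ : ℝ → ℝ := fun x => ψ x - ε * (x - c) ^ 2 with hχdef
  have hmin : ∀ x ∈ U, χ s₀ ≤ χ x := by
    intro x hx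
    have h1 : h s₀ ≤ h x := hminI (Ioo_subset_Icc_self hx.2)
    have h2 : f x ≤ ψ x := hψge x hx.1
    have h1' : f s₀ - ε * (s₀ - c) ^ 2 ≤ f x - ε * (x - c) ^ 2 := h1
    show ψ s₀ - ε * (s₀ - c) ^ 2 ≤ ψ x - ε * (x - c) ^ 2
    rw [hψs₀]
    linarith
  have hqd : ∀ x : ℝ, HasDerivAt (fun y => ε * (y - c) ^ 2) (ε * (2 * (x - c))) x := by
    intro x
    have h1 : HasDerivAt (fun y : ℝ => (y - c) ^ 2) (2 * (x - c) ^ 1 * 1) x :=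
      ((hasDerivAt_id x).sub_const c).pow 2
    simpa using h1.const_mul ε
  have hχd : DifferentiableOn ℝ χ U := by
    apply DifferentiableOn.sub (hψd.mono inter_subset_left)
    exact fun x _ => ((hqd x).differentiableAt).differentiableWithinAt
  set g : ℝ → ℝ := fun x => deriv ψ x - ε * (2 * (x - c)) with hg
  have heq : deriv χ =ᶠ[𝓝 s₀] g := by
    filter_upwards [hUopen.mem_nhds hs₀U] with x hx
    have hdψ : DifferentiableAt ℝ ψ x := hψd.differentiableAt (isOpen_Ioo.mem_nhds hx.1)
    rw [hχdef, hg]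
    rw [deriv_fun_sub hdψ (hqd x).differentiableAt, (hqd x).deriv]
  have hgd : DifferentiableAt ℝ g s₀ := by
    apply DifferentiableAt.sub
    · exact hψd'.differentiableAt (isOpen_Ioo.mem_nhds hs₀U.1)
    · have hr : HasDerivAt (fun y : ℝ => ε * (2 * (y - c))) (ε * 2) s₀ := by
        simpa using (((hasDerivAt_id s₀).sub_const c).const_mul 2).const_mul ε
      exact hr.differentiableAt
  have hd2 : DifferentiableAt ℝ (deriv χ) s₀ := (heq.differentiableAt_iff).2 hgd
  have hderiv2 : deriv (deriv χ) s₀ = deriv (deriv ψ) s₀ - ε * 2 := by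
    rw [heq.deriv_eq, hg]
    have hdψ' : DifferentiableAt ℝ (deriv ψ) s₀ :=
      hψd'.differentiableAt (isOpen_Ioo.mem_nhds hs₀U.1)
    have hr : HasDerivAt (fun y : ℝ => ε * (2 * (y - c))) (ε * 2) s₀ := by
      simpa using (((hasDerivAt_id s₀).sub_const c).const_mul 2).const_mul ε
    rw [deriv_fun_sub hdψ' hr.differentiableAt, hr.deriv]
  have hneg : deriv (deriv χ) s₀ < 0 := by rw [hderiv2]; linarith
  exact aux_no_min χ s₀ U hUopen hs₀U hχd hd2 hmin hneg
end
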